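/- arXiv:2108.11632 — 5 statements merged into one kernel-verified Lean document; each statement's English description precedes it below -/
import Mathlib

section
/- Let n ≥ 1 be an integer and let d be a real number with 0 < d < 1. Then Σ_{k=1}^{n−1} min(1, k/(nd)) = (1/2)·(1 − ψ(nd)/(nd) − nd) + (n − 1). -/
noncomputable def psi (x : ℝ) : ℝ := (x - ⌊x⌋) - (x - ⌊x⌋) ^ 2

theorem stmt4 (n : ℕ) (hn : 1 ≤ n) (d : ℝ) (hd0 : 0 < d) (hd1 : d < 1) :
    (∑ k ∈ Finset.Ico 1 n, min (1:ℝ) (k / (n * d)))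
      = (1/2) * (1 - psi (n * d) / (n * d) - n * d) + (n - 1) := by
  set x : ℝ := n * d with hxdef
  have hn0 : (0:ℝ) < n := by exact_mod_cast Nat.pos_of_ne_zero (by omega)
  have hx : 0 < x := mul_pos hn0 hd0
  have hxn : x < n := by
    calc x = n * d := rfl
    _ < n * 1 := by nlinarith
    _ = n := mul_one _
  set m : ℕ := (⌊x⌋).toNat with hmdef
  have hfloor : (⌊x⌋ : ℝ) = (m : ℝ) := by
    have : 0 ≤ ⌊x⌋ := Int.floor_nonneg.mpr hx.le
    rw [hmdef]
    exact_mod_cast (Int.toNat_of_nonneg this).symm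
  have hm1 : (m : ℝ) ≤ x := by rw [← hfloor]; exact Int.floor_le x
  have hm2 : x < (m : ℝ) + 1 := by rw [← hfloor]; exact Int.lt_floor_add_one x
  have hmn : m + 1 ≤ n := by
    have : (m:ℝ) < n := lt_of_le_of_lt hm1 hxn
    exact_mod_cast Nat.succ_le_of_lt (by exact_mod_cast this)
  rw [← Finset.sum_Ico_consecutive _ (by omega : 1 ≤ m + 1) hmn]
  have h1 : ∑ k ∈ Finset.Ico 1 (m+1), min (1:ℝ) (k / x)
      = (∑ k ∈ Finset.Ico 1 (m+1), (k:ℝ)) / x := by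
    rw [Finset.sum_div]
    apply Finset.sum_congr rfl
    intro k hk
    have hk' : k ≤ m := by simp [Finset.mem_Ico] at hk; omega
    have : (k:ℝ) ≤ x := le_trans (by exact_mod_cast hk') hm1
    exact min_eq_right ((div_le_one hx).mpr this)
  have h2 : ∑ k ∈ Finset.Ico (m+1) n, min (1:ℝ) (k / x) = ((n - (m+1) : ℕ) : ℝ) := by
    rw [Finset.sum_congr rfl (fun k hk => ?_), Finset.sum_const, Nat.card_Ico, nsmul_eq_mul,
      mul_one]
    have hk' : m + 1 ≤ k := by simp [Finset.mem_Ico] at hk; omega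
    have : x ≤ (k:ℝ) := le_trans hm2.le (by exact_mod_cast hk')
    exact min_eq_left ((one_le_div hx).mpr this)
  have hgauss : (∑ k ∈ Finset.Ico 1 (m+1), (k:ℝ)) = m * (m+1) / 2 := by
    induction m with
    | zero => simp
    | succ p ih =>
      rw [Finset.sum_Ico_succ_top (by omega), ih]
      push_cast
      ring
  rw [h1, h2, hgauss]
  have hpsi : psi x = (x - m) - (x - m)^2 := by rw [psi, hfloor]
  rw [hpsi]
  have hcast : ((n - (m+1) : ℕ) : ℝ) = (n:ℝ) - (m:ℝ) - 1 := by
    push_cast [Nat.cast_sub hmn]; ring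
  rw [hcast]
  field_simp
  ring
end

section
/- Let α = 1, so that f_1(x) = 1/(π(1+x²)) is the standard Cauchy density and f_{1,t}(x) = t/(π(t²+x²)). Let 0 < r < s ≤ 1. Then lim_{z→∞} [π²(z/r)² / log(z/r)] · ∫_0^∞ x f_1(x) ρ_{r,s}(xz) dx = 1/r. -/
open MeasureTheory Real Filter

noncomputable def cauchyDensity (x : ℝ) : ℝ := 1 / (π * (1 + x ^ 2))

noncomputable def cauchyDensityT (t x : ℝ) : ℝ := t / (π * (t ^ 2 + x ^ 2))

noncomputable def cauchyRho (r s u : ℝ) : ℝ :=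
  (1/2) * cauchyDensityT r u +
    ∫ v in Set.Ioi (0:ℝ), cauchyDensityT r (u + v) * cauchyDensityT (s - r) v

open Set

-- helper: ∫₀^∞ (a²+c²x²)⁻¹ = π/(2ac)
lemma hd_quad {a c : ℝ} (ha : 0 < a) (hc : 0 < c) (x : ℝ) :
    HasDerivAt (fun x : ℝ => (1/(a*c)) * arctan (c*x/a)) ((a^2 + c^2*x^2)⁻¹) x := by
  have h1 : HasDerivAt (fun x : ℝ => c*x/a) (c/a) x := by
    simpa using ((hasDerivAt_id x).const_mul c).div_const a
  have h2 := (Real.hasDerivAt_arctan (c*x/a)).comp x h1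
  have h3 := h2.const_mul (1/(a*c))
  refine h3.congr_deriv ?_
  have h4 : (1 + (c*x/a)^2) ≠ 0 := by positivity
  field_simp
lemma tend_quad {a c : ℝ} (ha : 0 < a) (hc : 0 < c) :
    Tendsto (fun x : ℝ => (1/(a*c)) * arctan (c*x/a)) atTop (nhds ((1/(a*c)) * (π/2))) := by
  refine Tendsto.const_mul _ ((Real.tendsto_arctan_atTop.mono_right nhdsWithin_le_nhds).comp ?_)
  exact (tendsto_id.const_mul_atTop hc).atTop_div_const ha

lemma integrableOn_quad {a c : ℝ} (ha : 0 < a) (hc : 0 < c) :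
    IntegrableOn (fun x : ℝ => (a^2 + c^2*x^2)⁻¹) (Ioi (0:ℝ)) :=
  integrableOn_Ioi_deriv_of_nonneg' (fun x _ => hd_quad ha hc x)
    (fun x _ => by positivity) (tend_quad ha hc)

lemma integral_quad {a c : ℝ} (ha : 0 < a) (hc : 0 < c) :
    ∫ x in Ioi (0:ℝ), (a^2 + c^2*x^2)⁻¹ = π/(2*a*c) := by
  rw [integral_Ioi_of_hasDerivAt_of_nonneg' (fun x _ => hd_quad ha hc x)
    (fun x _ => by positivity) (tend_quad ha hc)]
  simp [arctan_zero]
  ring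

-- helper: ∫₀^∞ x(a²+c²x²)⁻² = 1/(2a²c²)
lemma hd_quad2 {a c : ℝ} (ha : 0 < a) (hc : 0 < c) (x : ℝ) :
    HasDerivAt (fun x : ℝ => -(2*c^2)⁻¹ * (a^2 + c^2*x^2)⁻¹) (x * ((a^2 + c^2*x^2)^2)⁻¹) x := by
  have h0 : (a^2 + c^2*x^2) ≠ 0 := by positivity
  have h1 : HasDerivAt (fun x : ℝ => a^2 + c^2*x^2) (c^2*(2*x)) x := by
    simpa using ((hasDerivAt_pow 2 x).const_mul (c^2)).const_add (a^2)
  have h2 := (h1.inv h0).const_mul (-(2*c^2)⁻¹)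
  refine h2.congr_deriv ?_
  field_simp
lemma tend_quad2 {a c : ℝ} (ha : 0 < a) (hc : 0 < c) :
    Tendsto (fun x : ℝ => -(2*c^2)⁻¹ * (a^2 + c^2*x^2)⁻¹) atTop (nhds 0) := by
  rw [show (0:ℝ) = -(2*c^2)⁻¹ * 0 by ring]
  refine Tendsto.const_mul _ (Tendsto.inv_tendsto_atTop ?_)
  apply tendsto_atTop_add_const_left
  exact (tendsto_pow_atTop two_ne_zero).const_mul_atTop (by positivity)

lemma integrableOn_quad2 {a c : ℝ} (ha : 0 < a) (hc : 0 < c) :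
    IntegrableOn (fun x : ℝ => x * ((a^2 + c^2*x^2)^2)⁻¹) (Ioi (0:ℝ)) :=
  integrableOn_Ioi_deriv_of_nonneg' (fun x _ => hd_quad2 ha hc x)
    (fun x hx => by have := hx.out; positivity) (tend_quad2 ha hc)

lemma integral_quad2 {a c : ℝ} (ha : 0 < a) (hc : 0 < c) :
    ∫ x in Ioi (0:ℝ), x * ((a^2 + c^2*x^2)^2)⁻¹ = 1/(2*a^2*c^2) := by
  rw [integral_Ioi_of_hasDerivAt_of_nonneg' (fun x _ => hd_quad2 ha hc x)
    (fun x hx => by have := hx.out; positivity) (tend_quad2 ha hc)]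
  have : (a^2:ℝ) ≠ 0 := by positivity
  field_simp
  ring

lemma hd_E {r z : ℝ} (hr : 0 < r) (hz : r < z) (x : ℝ) :
    HasDerivAt (fun x : ℝ => (r/(2*π^2*(z^2-r^2))) * (Real.log (r^2+z^2*x^2) - Real.log (1+x^2)))
      (x * cauchyDensity x * cauchyDensityT r (x*z)) x := by
  have hz0 : 0 < z := hr.trans hz
  have h0 : (r^2 + z^2*x^2) ≠ 0 := by positivity
  have h1 : (1 + x^2 : ℝ) ≠ 0 := by positivity
  have hd1 : HasDerivAt (fun x : ℝ => r^2 + z^2*x^2) (z^2*(2*x)) x := by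
    simpa using ((hasDerivAt_pow 2 x).const_mul (z^2)).const_add (r^2)
  have hd2 : HasDerivAt (fun x : ℝ => 1 + x^2) (2*x) x := by
    simpa using (hasDerivAt_pow 2 x).const_add (1:ℝ)
  have h2 := ((hd1.log h0).sub (hd2.log h1)).const_mul (r/(2*π^2*(z^2-r^2)))
  refine h2.congr_deriv ?_
  have hπ : (π:ℝ) ≠ 0 := pi_ne_zero
  have hzr : z^2 - r^2 ≠ 0 := by nlinarith
  simp only [cauchyDensity, cauchyDensityT]
  field_simp
  ring

lemma tend_E {r z : ℝ} (hr : 0 < r) (hz : r < z) :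
    Tendsto (fun x : ℝ => (r/(2*π^2*(z^2-r^2))) * (Real.log (r^2+z^2*x^2) - Real.log (1+x^2)))
      atTop (nhds ((r/(2*π^2*(z^2-r^2))) * Real.log (z^2))) := by
  have hz0 : 0 < z := hr.trans hz
  refine Tendsto.const_mul _ ?_
  have key : Tendsto (fun x : ℝ => (r^2+z^2*x^2)/(1+x^2)) atTop (nhds (z^2)) := by
    have heq : ∀ x : ℝ, (r^2+z^2*x^2)/(1+x^2) = z^2 + (r^2-z^2)/(1+x^2) := by
      intro x
      have h1 : (1 + x^2 : ℝ) ≠ 0 := by positivity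
      field_simp
      ring
    simp only [heq]
    have h0 : Tendsto (fun x:ℝ => (r^2-z^2)/(1+x^2)) atTop (nhds 0) :=
      tendsto_const_nhds.div_atTop
        (tendsto_atTop_add_const_left _ _ (tendsto_pow_atTop two_ne_zero))
    simpa using tendsto_const_nhds.add h0
  have hlog := (Real.continuousAt_log (by positivity : (z^2:ℝ) ≠ 0)).tendsto.comp key
  refine hlog.congr' ?_
  filter_upwards [eventually_gt_atTop (0:ℝ)] with x hx
  have h1 : (0:ℝ) < 1 + x^2 := by positivity
  have h2 : (0:ℝ) < r^2 + z^2*x^2 := by positivity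
  simp [Function.comp, Real.log_div h2.ne' h1.ne']

lemma E_nonneg {r z : ℝ} (hr : 0 < r) (x : ℝ) (hx : x ∈ Ioi (0:ℝ)) :
    0 ≤ x * cauchyDensity x * cauchyDensityT r (x*z) := by
  have hx0 : 0 < x := hx.out
  simp only [cauchyDensity, cauchyDensityT]
  positivity

lemma E_integrable {r z : ℝ} (hr : 0 < r) (hz : r < z) :
    IntegrableOn (fun x => x * cauchyDensity x * cauchyDensityT r (x*z)) (Ioi (0:ℝ)) :=
  integrableOn_Ioi_deriv_of_nonneg' (fun x _ => hd_E hr hz x) (E_nonneg hr) (tend_E hr hz)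

lemma E_formula {r z : ℝ} (hr : 0 < r) (hz : r < z) :
    ∫ x in Ioi (0:ℝ), x * cauchyDensity x * cauchyDensityT r (x*z)
      = r * Real.log (z/r) / (π^2*(z^2-r^2)) := by
  rw [integral_Ioi_of_hasDerivAt_of_nonneg' (fun x _ => hd_E hr hz x) (E_nonneg hr)
    (tend_E hr hz)]
  have hz0 : 0 < z := hr.trans hz
  have hπ : (π:ℝ) ≠ 0 := pi_ne_zero
  have hzr : z^2 - r^2 ≠ 0 := by nlinarith
  rw [Real.log_div hz0.ne' hr.ne']
  norm_num [Real.log_pow]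
  field_simp
lemma cauchyT_nonneg {t : ℝ} (ht : 0 ≤ t) (x : ℝ) : 0 ≤ cauchyDensityT t x := by
  simp only [cauchyDensityT]; positivity

lemma cauchyT_anti {t u v : ℝ} (ht : 0 < t) (hu : 0 ≤ u) (hv : 0 ≤ v) :
    cauchyDensityT t (u+v) ≤ cauchyDensityT t u := by
  simp only [cauchyDensityT]
  apply div_le_div_of_nonneg_left ht.le (by positivity)
  have h : t^2+u^2 ≤ t^2+(u+v)^2 := by nlinarith [mul_nonneg hu hv]
  exact mul_le_mul_of_nonneg_left h pi_pos.le

lemma continuous_cauchyT {t : ℝ} (ht : t ≠ 0) : Continuous (cauchyDensityT t) := by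
  apply continuous_const.div (by continuity)
  intro x
  have : t^2 > 0 := by positivity
  have := pi_pos
  positivity

lemma continuous_cauchyD : Continuous cauchyDensity := by
  apply continuous_const.div (by continuity)
  intro x
  have := pi_pos
  positivity

-- pointwise difference bound
lemma ptwise_diff {r z v : ℝ} (hr : 0 < r) (hz : 0 < z) (hv : 0 ≤ v)
    {x : ℝ} (hx : x ∈ Ioi (0:ℝ)) :
    x * cauchyDensity x * cauchyDensityT r (x*z) - x * cauchyDensity x * cauchyDensityT r (x*z+v)
      ≤ (r/π^2) * ((2*v/z) * (r^2+z^2*x^2)⁻¹ + v^2 * (x*(((r^2+z^2*x^2)^2)⁻¹))) := by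
  have hx0 : 0 < x := hx.out
  have hπ := pi_pos
  have hA : (0:ℝ) < r^2 + z^2*x^2 := by positivity
  have hB : (0:ℝ) < r^2 + (x*z+v)^2 := by positivity
  have hAB : r^2 + z^2*x^2 ≤ r^2 + (x*z+v)^2 := by
    nlinarith [mul_nonneg (mul_nonneg hx0.le hz.le) hv]
  have hBA : (0:ℝ) ≤ (r^2 + (x*z+v)^2) - (r^2 + z^2*x^2) := by linarith
  have hΔ : cauchyDensityT r (x*z) - cauchyDensityT r (x*z+v)
      = r*((r^2 + (x*z+v)^2) - (r^2 + z^2*x^2))/(π*((r^2 + z^2*x^2)*(r^2 + (x*z+v)^2))) := by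
    simp only [cauchyDensityT]
    rw [div_sub_div _ _ (by positivity) (by positivity)]
    rw [show r^2 + (x*z)^2 = r^2 + z^2*x^2 by ring]
    rw [div_eq_div_iff (by positivity) (by positivity)]
    ring
  have hΔ2 : r*((r^2 + (x*z+v)^2) - (r^2 + z^2*x^2))/(π*((r^2 + z^2*x^2)*(r^2 + (x*z+v)^2)))
      ≤ r*((r^2 + (x*z+v)^2) - (r^2 + z^2*x^2))/(π*((r^2 + z^2*x^2)*(r^2 + z^2*x^2))) := by
    apply div_le_div_of_nonneg_left (mul_nonneg hr.le hBA) (by positivity)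
    have h2 : (r^2+z^2*x^2)*(r^2+z^2*x^2) ≤ (r^2+z^2*x^2)*(r^2+(x*z+v)^2) :=
      mul_le_mul_of_nonneg_left hAB hA.le
    exact mul_le_mul_of_nonneg_left h2 pi_pos.le
  have hcd : x * cauchyDensity x ≤ x/π := by
    simp only [cauchyDensity]
    rw [mul_one_div]
    apply div_le_div_of_nonneg_left hx0.le hπ
    nlinarith
  have hcd0 : 0 ≤ x * cauchyDensity x := by
    simp only [cauchyDensity]; positivity
  have step1 : x * cauchyDensity x * cauchyDensityT r (x*z)
        - x * cauchyDensity x * cauchyDensityT r (x*z+v)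
      ≤ (x/π) * (r*((r^2 + (x*z+v)^2) - (r^2 + z^2*x^2))/(π*((r^2 + z^2*x^2)*(r^2 + z^2*x^2)))) := by
    calc x * cauchyDensity x * cauchyDensityT r (x*z)
          - x * cauchyDensity x * cauchyDensityT r (x*z+v)
        = (x * cauchyDensity x) * (cauchyDensityT r (x*z) - cauchyDensityT r (x*z+v)) := by ring
      _ ≤ (x/π) * (r*((r^2 + (x*z+v)^2) - (r^2 + z^2*x^2))/(π*((r^2 + z^2*x^2)*(r^2 + z^2*x^2)))) := by
          apply mul_le_mul hcd _ _ (by positivity)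
          · rw [hΔ]; exact hΔ2
          · rw [hΔ]; positivity
  refine step1.trans ?_
  rw [← sub_nonneg]
  have expand : (r/π^2) * ((2*v/z) * (r^2+z^2*x^2)⁻¹ + v^2 * (x*(((r^2+z^2*x^2)^2)⁻¹)))
      - (x/π) * (r*((r^2 + (x*z+v)^2) - (r^2 + z^2*x^2))/(π*((r^2 + z^2*x^2)*(r^2 + z^2*x^2))))
      = r * (2*v*(r^2+z^2*x^2) + v^2*x*z - x*z*((r^2 + (x*z+v)^2) - (r^2 + z^2*x^2)))
          / (π^2 * (r^2+z^2*x^2)^2 * z) := by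
    field_simp
  rw [expand]
  apply div_nonneg _ (by positivity)
  have key : x*z*((r^2 + (x*z+v)^2) - (r^2 + z^2*x^2)) ≤ 2*v*(r^2+z^2*x^2) + v^2*x*z := by
    nlinarith [sq_nonneg (x*z), mul_pos hx0 hz]
  nlinarith

lemma cauchyT_eq {b : ℝ} (hb : 0 < b) :
    ∀ v : ℝ, cauchyDensityT b v = (b/π) * (b^2 + 1^2*v^2)⁻¹ := by
  intro v
  have hπ := pi_pos
  simp only [cauchyDensityT, one_pow]
  rw [eq_comm, mul_comm, inv_mul_eq_div, div_div, one_mul]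

lemma integrableOn_cauchyT {b : ℝ} (hb : 0 < b) :
    IntegrableOn (fun v => cauchyDensityT b v) (Ioi (0:ℝ)) := by
  simp only [cauchyT_eq hb]
  exact (integrableOn_quad hb one_pos).const_mul _

lemma integral_cauchyT {b : ℝ} (hb : 0 < b) :
    ∫ v in Ioi (0:ℝ), cauchyDensityT b v = 1/2 := by
  simp only [cauchyT_eq hb]
  rw [integral_const_mul, integral_quad hb one_pos]
  have hπ := pi_pos
  field_simp

lemma G_ptwise_le {r z v : ℝ} (hr : 0 < r) (hz : 0 < z) (hv : 0 ≤ v)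
    {x : ℝ} (hx : x ∈ Ioi (0:ℝ)) :
    x * cauchyDensity x * cauchyDensityT r (x*z+v) ≤ x * cauchyDensity x * cauchyDensityT r (x*z) := by
  have hx0 : 0 < x := hx.out
  have hcd0 : 0 ≤ x * cauchyDensity x := by
    simp only [cauchyDensity]; positivity
  exact mul_le_mul_of_nonneg_left (cauchyT_anti hr (by positivity) hv) hcd0

lemma G_nonneg {r z v : ℝ} (hr : 0 < r) (hv : 0 ≤ v) {x : ℝ} (hx : x ∈ Ioi (0:ℝ)) :
    0 ≤ x * cauchyDensity x * cauchyDensityT r (x*z+v) := by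
  have hx0 : 0 < x := hx.out
  simp only [cauchyDensity, cauchyDensityT]
  positivity

lemma G_integrable {r z v : ℝ} (hr : 0 < r) (hz : r < z) (hv : 0 ≤ v) :
    IntegrableOn (fun x => x * cauchyDensity x * cauchyDensityT r (x*z+v)) (Ioi (0:ℝ)) := by
  have hz0 : 0 < z := hr.trans hz
  refine (E_integrable hr hz).mono' ?_ ?_
  · exact Continuous.aestronglyMeasurable (by
      exact (continuous_id.mul continuous_cauchyD).mul
        ((continuous_cauchyT hr.ne').comp ((continuous_id.mul continuous_const).add continuous_const)))
  · rw [ae_restrict_iff' measurableSet_Ioi]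
    filter_upwards with x hx
    rw [Real.norm_eq_abs, abs_of_nonneg (G_nonneg hr hv hx)]
    exact G_ptwise_le hr hz0 hv hx

lemma G_val_le {r z v : ℝ} (hr : 0 < r) (hz : r < z) (hv : 0 ≤ v) :
    (∫ x in Ioi (0:ℝ), x * cauchyDensity x * cauchyDensityT r (x*z+v))
      ≤ ∫ x in Ioi (0:ℝ), x * cauchyDensity x * cauchyDensityT r (x*z) :=
  setIntegral_mono_on (G_integrable hr hz hv) (E_integrable hr hz) measurableSet_Ioi
    (fun x hx => G_ptwise_le hr (hr.trans hz) hv hx)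

lemma G_val_nonneg {r z v : ℝ} (hr : 0 < r) (hv : 0 ≤ v) :
    0 ≤ ∫ x in Ioi (0:ℝ), x * cauchyDensity x * cauchyDensityT r (x*z+v) :=
  setIntegral_nonneg measurableSet_Ioi (fun x hx => G_nonneg hr hv hx)

lemma Bnd_integrable {r z v : ℝ} (hr : 0 < r) (hz0 : 0 < z) :
    IntegrableOn (fun x : ℝ => (r/π^2) * ((2*v/z) * (r^2+z^2*x^2)⁻¹
      + v^2 * (x*(((r^2+z^2*x^2)^2)⁻¹)))) (Ioi (0:ℝ)) :=
  (((integrableOn_quad hr hz0).const_mul _).add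
    ((integrableOn_quad2 hr hz0).const_mul _)).const_mul _

lemma Bnd_integral {r z v : ℝ} (hr : 0 < r) (hz0 : 0 < z) :
    ∫ x in Ioi (0:ℝ), (r/π^2) * ((2*v/z) * (r^2+z^2*x^2)⁻¹
        + v^2 * (x*(((r^2+z^2*x^2)^2)⁻¹)))
      = (v/π + v^2/(2*π^2*r))/z^2 := by
  rw [integral_const_mul,
    integral_add ((integrableOn_quad hr hz0).const_mul _) ((integrableOn_quad2 hr hz0).const_mul _),
    integral_const_mul, integral_const_mul, integral_quad hr hz0, integral_quad2 hr hz0]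
  have hπ := pi_pos
  field_simp

lemma diff_val {r z v : ℝ} (hr : 0 < r) (hz : r < z) (hv : 0 ≤ v) :
    (∫ x in Ioi (0:ℝ), x * cauchyDensity x * cauchyDensityT r (x*z))
      - (∫ x in Ioi (0:ℝ), x * cauchyDensity x * cauchyDensityT r (x*z+v))
      ≤ (v/π + v^2/(2*π^2*r))/z^2 := by
  have hz0 : 0 < z := hr.trans hz
  rw [← integral_sub (E_integrable hr hz) (G_integrable hr hz hv)]
  rw [← Bnd_integral (v := v) hr hz0]
  exact setIntegral_mono_on ((E_integrable hr hz).sub (G_integrable hr hz hv))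
    (Bnd_integrable hr hz0) measurableSet_Ioi (fun x hx => ptwise_diff hr hz0 hv hx)

lemma cauchyT_le {t : ℝ} (ht : 0 < t) (y : ℝ) : cauchyDensityT t y ≤ 1/(π*t) := by
  simp only [cauchyDensityT]
  rw [div_le_div_iff₀ (by positivity) (by positivity)]
  nlinarith [pi_pos, sq_nonneg y]

lemma H_cont {r b z : ℝ} (hr : 0 < r) (hb : 0 < b) :
    Continuous (fun p : ℝ × ℝ => p.1 * cauchyDensity p.1
      * (cauchyDensityT r (p.1*z+p.2) * cauchyDensityT b p.2)) := by
  refine (continuous_fst.mul (continuous_cauchyD.comp continuous_fst)).mul (Continuous.mul ?_ ?_)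
  · exact (continuous_cauchyT hr.ne').comp ((continuous_fst.mul continuous_const).add continuous_snd)
  · exact (continuous_cauchyT hb.ne').comp continuous_snd

lemma section_int {r b z x : ℝ} (hr : 0 < r) (hb : 0 < b) (hx : 0 < x) :
    IntegrableOn (fun v => x * cauchyDensity x
      * (cauchyDensityT r (x*z+v) * cauchyDensityT b v)) (Ioi (0:ℝ)) := by
  refine ((integrableOn_cauchyT hb).const_mul (x * cauchyDensity x * (1/(π*r)))).mono' ?_ ?_
  · exact Continuous.aestronglyMeasurable (by
      refine continuous_const.mul (Continuous.mul ?_ ?_)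
      · exact (continuous_cauchyT hr.ne').comp (continuous_const.add continuous_id)
      · exact continuous_cauchyT hb.ne')
  · rw [ae_restrict_iff' measurableSet_Ioi]
    filter_upwards with v hv
    have hcd0 : 0 ≤ x * cauchyDensity x := by simp only [cauchyDensity]; positivity
    have h1 : 0 ≤ cauchyDensityT r (x*z+v) := cauchyT_nonneg hr.le _
    have h2 : 0 ≤ cauchyDensityT b v := cauchyT_nonneg hb.le _
    rw [Real.norm_eq_abs, abs_of_nonneg (by positivity)]
    calc x * cauchyDensity x * (cauchyDensityT r (x*z+v) * cauchyDensityT b v)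
        = (x * cauchyDensity x * cauchyDensityT r (x*z+v)) * cauchyDensityT b v := by ring
      _ ≤ (x * cauchyDensity x * (1/(π*r))) * cauchyDensityT b v := by
          exact mul_le_mul_of_nonneg_right
            (mul_le_mul_of_nonneg_left (cauchyT_le hr _) hcd0) h2

lemma prod_int {r b z : ℝ} (hr : 0 < r) (hz : r < z) (hb : 0 < b) :
    Integrable (Function.uncurry fun x v => x * cauchyDensity x
        * (cauchyDensityT r (x*z+v) * cauchyDensityT b v))
      ((volume.restrict (Ioi (0:ℝ))).prod (volume.restrict (Ioi (0:ℝ)))) := by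
  have hcont := H_cont (r := r) (b := b) (z := z) hr hb
  have huncurry : (Function.uncurry fun x v => x * cauchyDensity x
      * (cauchyDensityT r (x*z+v) * cauchyDensityT b v))
      = fun p : ℝ × ℝ => p.1 * cauchyDensity p.1
        * (cauchyDensityT r (p.1*z+p.2) * cauchyDensityT b p.2) := rfl
  rw [huncurry, integrable_prod_iff (hcont.aestronglyMeasurable)]
  constructor
  · rw [ae_restrict_iff' measurableSet_Ioi]
    filter_upwards with x hx
    exact section_int hr hb hx.out
  · refine ((E_integrable hr hz).const_mul (1/2)).mono'
      (hcont.norm.aestronglyMeasurable.integral_prod_right') ?_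
    rw [ae_restrict_iff' measurableSet_Ioi]
    filter_upwards with x hx
    have hx0 : 0 < x := hx.out
    rw [Real.norm_eq_abs, abs_of_nonneg (integral_nonneg (fun v => norm_nonneg _))]
    have step : (∫ v in Ioi (0:ℝ), ‖x * cauchyDensity x
          * (cauchyDensityT r (x*z+v) * cauchyDensityT b v)‖)
        ≤ ∫ v in Ioi (0:ℝ), (x * cauchyDensity x * cauchyDensityT r (x*z)) * cauchyDensityT b v := by
      refine setIntegral_mono_on (section_int hr hb hx0).norm
        ((integrableOn_cauchyT hb).const_mul _) measurableSet_Ioi ?_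
      intro v hv
      have hcd0 : 0 ≤ x * cauchyDensity x := by simp only [cauchyDensity]; positivity
      have h1 : 0 ≤ cauchyDensityT r (x*z+v) := cauchyT_nonneg hr.le _
      have h2 : 0 ≤ cauchyDensityT b v := cauchyT_nonneg hb.le _
      rw [Real.norm_eq_abs, abs_of_nonneg (by positivity)]
      calc x * cauchyDensity x * (cauchyDensityT r (x*z+v) * cauchyDensityT b v)
          = (x * cauchyDensity x * cauchyDensityT r (x*z+v)) * cauchyDensityT b v := by ring
        _ ≤ (x * cauchyDensity x * cauchyDensityT r (x*z)) * cauchyDensityT b v :=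
            mul_le_mul_of_nonneg_right
              (G_ptwise_le hr (hr.trans hz) hv.out.le hx) h2
    refine step.trans ?_
    rw [integral_const_mul, integral_cauchyT hb]
    exact le_of_eq (by ring)

lemma swap_eq {r b z : ℝ} (hr : 0 < r) (hz : r < z) (hb : 0 < b) :
    ∫ x in Ioi (0:ℝ), (x * cauchyDensity x)
        * ∫ v in Ioi (0:ℝ), cauchyDensityT r (x*z+v) * cauchyDensityT b v
      = ∫ v in Ioi (0:ℝ), (∫ x in Ioi (0:ℝ), x * cauchyDensity x * cauchyDensityT r (x*z+v))
          * cauchyDensityT b v := by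
  have h1 : ∀ x : ℝ, (x * cauchyDensity x)
      * (∫ v in Ioi (0:ℝ), cauchyDensityT r (x*z+v) * cauchyDensityT b v)
      = ∫ v in Ioi (0:ℝ), x * cauchyDensity x * (cauchyDensityT r (x*z+v) * cauchyDensityT b v) :=
    fun x => (integral_const_mul _ _).symm
  simp only [h1]
  rw [integral_integral_swap (prod_int hr hz hb)]
  have h2 : ∀ v : ℝ, (∫ x in Ioi (0:ℝ), x * cauchyDensity x
        * (cauchyDensityT r (x*z+v) * cauchyDensityT b v))
      = (∫ x in Ioi (0:ℝ), x * cauchyDensity x * cauchyDensityT r (x*z+v))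
          * cauchyDensityT b v := by
    intro v
    rw [← integral_mul_const]
    congr 1
    funext x
    ring
  simp only [h2]


lemma split_eq {r s z : ℝ} (hr : 0 < r) (hz : r < z) (hb : 0 < s - r) :
    ∫ x in Ioi (0:ℝ), x * cauchyDensity x * cauchyRho r s (x * z)
      = (1/2) * (∫ x in Ioi (0:ℝ), x * cauchyDensity x * cauchyDensityT r (x*z))
        + ∫ v in Ioi (0:ℝ), (∫ x in Ioi (0:ℝ), x * cauchyDensity x * cauchyDensityT r (x*z+v))
            * cauchyDensityT (s-r) v := by
  have e1 : ∀ x : ℝ, x * cauchyDensity x * cauchyRho r s (x * z)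
      = (1/2) * (x * cauchyDensity x * cauchyDensityT r (x*z))
        + (x * cauchyDensity x)
          * ∫ v in Ioi (0:ℝ), cauchyDensityT r (x*z+v) * cauchyDensityT (s-r) v := by
    intro x
    simp only [cauchyRho]
    ring
  simp only [e1]
  have hint2 : Integrable (fun x => (x * cauchyDensity x)
      * ∫ v in Ioi (0:ℝ), cauchyDensityT r (x*z+v) * cauchyDensityT (s-r) v)
      (volume.restrict (Ioi (0:ℝ))) := by
    have h := (prod_int hr hz hb).integral_prod_left
    refine h.congr (Eventually.of_forall fun x => ?_)
    show (∫ v in Ioi (0:ℝ), x * cauchyDensity x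
        * (cauchyDensityT r (x*z+v) * cauchyDensityT (s-r) v)) = _
    exact integral_const_mul _ _
  rw [integral_add ((E_integrable hr hz).const_mul (1/2)) hint2, integral_const_mul]
  rw [swap_eq hr hz hb]

lemma log_div_pos {r z : ℝ} (hr : 0 < r) (hz : r < z) : 0 < Real.log (z/r) :=
  Real.log_pos (by rw [lt_div_iff₀ hr]; linarith)

lemma limT_E {r : ℝ} (hr : 0 < r) :
    Tendsto (fun z : ℝ => π^2*(z/r)^2/Real.log (z/r)
      * ∫ x in Ioi (0:ℝ), x * cauchyDensity x * cauchyDensityT r (x*z)) atTop (nhds (1/r)) := by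
  have h0 : Tendsto (fun z : ℝ => (z^2)⁻¹) atTop (nhds 0) :=
    tendsto_inv_atTop_zero.comp (tendsto_pow_atTop two_ne_zero)
  have h1 : Tendsto (fun z : ℝ => r^3*(z^2)⁻¹) atTop (nhds 0) := by
    simpa using h0.const_mul (r^3)
  have h2 : Tendsto (fun z : ℝ => r - r^3*(z^2)⁻¹) atTop (nhds r) := by
    simpa using tendsto_const_nhds.sub h1
  have hq : Tendsto (fun z : ℝ => (r - r^3*(z^2)⁻¹)⁻¹) atTop (nhds (1/r)) := by
    rw [one_div]
    exact h2.inv₀ hr.ne'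
  refine hq.congr' ?_
  filter_upwards [eventually_gt_atTop r] with z hz
  rw [E_formula hr hz]
  have hz0 : 0 < z := hr.trans hz
  have hlog : Real.log (z/r) ≠ 0 := (log_div_pos hr hz).ne'
  have hzr : z^2 - r^2 ≠ 0 := by nlinarith
  have hπ : (π:ℝ) ≠ 0 := pi_ne_zero
  have h6 : (0:ℝ) < z^2 - r^2 := by nlinarith
  have h5 : z^2*r - r^3 ≠ 0 := ne_of_gt (by nlinarith [mul_pos hr h6])
  have h5' : r*z^2 - r^3 ≠ 0 := ne_of_gt (by nlinarith [mul_pos hr h6])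
  have hRHS : π^2*(z/r)^2/Real.log (z/r) * (r*Real.log (z/r)/(π^2*(z^2-r^2)))
      = z^2/(r*(z^2-r^2)) := by
    field_simp
  rw [hRHS, eq_div_iff (ne_of_gt (mul_pos hr h6))]
  field_simp [h5, h5']

lemma limG {r : ℝ} (hr : 0 < r) (v : ℝ) (hv : 0 ≤ v) :
    Tendsto (fun z : ℝ => π^2*(z/r)^2/Real.log (z/r)
      * ∫ x in Ioi (0:ℝ), x * cauchyDensity x * cauchyDensityT r (x*z+v)) atTop (nhds (1/r)) := by
  set C : ℝ := v/π + v^2/(2*π^2*r) with hC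
  have hlogtop : Tendsto (fun z : ℝ => Real.log (z/r)) atTop atTop :=
    Real.tendsto_log_atTop.comp (tendsto_id.atTop_div_const hr)
  have hcorr : Tendsto (fun z : ℝ => π^2*(z/r)^2/Real.log (z/r) * (C/z^2)) atTop (nhds 0) := by
    refine (tendsto_const_nhds.div_atTop hlogtop (f := fun _ : ℝ => π^2*C/r^2)).congr' ?_
    filter_upwards [eventually_gt_atTop r] with z hz
    have hz0 : 0 < z := hr.trans hz
    have hlog : Real.log (z/r) ≠ 0 := (log_div_pos hr hz).ne'
    have hπ : (π:ℝ) ≠ 0 := pi_ne_zero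
    field_simp
  have hlow : Tendsto (fun z : ℝ => π^2*(z/r)^2/Real.log (z/r)
      * (∫ x in Ioi (0:ℝ), x * cauchyDensity x * cauchyDensityT r (x*z))
      - π^2*(z/r)^2/Real.log (z/r) * (C/z^2)) atTop (nhds (1/r)) := by
    simpa using (limT_E hr).sub hcorr
  refine tendsto_of_tendsto_of_tendsto_of_le_of_le' hlow (limT_E hr) ?_ ?_
  · filter_upwards [eventually_gt_atTop r] with z hz
    have hT0 : 0 ≤ π^2*(z/r)^2/Real.log (z/r) :=
      div_nonneg (by positivity) (log_div_pos hr hz).le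
    have hd := mul_le_mul_of_nonneg_left (diff_val hr hz hv) hT0
    rw [mul_sub] at hd
    linarith
  · filter_upwards [eventually_gt_atTop r] with z hz
    have hT0 : 0 ≤ π^2*(z/r)^2/Real.log (z/r) :=
      div_nonneg (by positivity) (log_div_pos hr hz).le
    exact mul_le_mul_of_nonneg_left (G_val_le hr hz hv) hT0

lemma vfun_int {r b z : ℝ} (hr : 0 < r) (hz : r < z) (hb : 0 < b) :
    Integrable (fun v => (∫ x in Ioi (0:ℝ), x * cauchyDensity x * cauchyDensityT r (x*z+v))
      * cauchyDensityT b v) (volume.restrict (Ioi (0:ℝ))) := by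
  have h := (prod_int hr hz hb).integral_prod_right
  refine h.congr (Eventually.of_forall fun v => ?_)
  show (∫ x in Ioi (0:ℝ), x * cauchyDensity x
      * (cauchyDensityT r (x*z+v) * cauchyDensityT b v))
      = (∫ x in Ioi (0:ℝ), x * cauchyDensity x * cauchyDensityT r (x*z+v)) * cauchyDensityT b v
  rw [← integral_mul_const]
  congr 1
  funext x
  ring

lemma limDCT {r b : ℝ} (hr : 0 < r) (hb : 0 < b) :
    Tendsto (fun z : ℝ => π^2*(z/r)^2/Real.log (z/r)
      * ∫ v in Ioi (0:ℝ), (∫ x in Ioi (0:ℝ), x * cauchyDensity x * cauchyDensityT r (x*z+v))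
          * cauchyDensityT b v) atTop (nhds (1/(2*r))) := by
  have key : Tendsto (fun z : ℝ => ∫ v in Ioi (0:ℝ), π^2*(z/r)^2/Real.log (z/r)
      * ((∫ x in Ioi (0:ℝ), x * cauchyDensity x * cauchyDensityT r (x*z+v))
          * cauchyDensityT b v)) atTop
      (nhds (∫ v in Ioi (0:ℝ), (1/r) * cauchyDensityT b v)) := by
    refine tendsto_integral_filter_of_dominated_convergence
      (fun v => (2/r) * cauchyDensityT b v) ?_ ?_ ?_ ?_
    · filter_upwards [eventually_gt_atTop r] with z hz
      exact ((vfun_int hr hz hb).aestronglyMeasurable.const_mul _)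
    · filter_upwards [eventually_ge_atTop (2*r)] with z hz2
      have hz : r < z := by linarith
      have hz0 : 0 < z := hr.trans hz
      rw [ae_restrict_iff' measurableSet_Ioi]
      filter_upwards with v hv
      have hT0 : 0 ≤ π^2*(z/r)^2/Real.log (z/r) :=
        div_nonneg (by positivity) (log_div_pos hr hz).le
      have hG0 := G_val_nonneg (r := r) (z := z) (v := v) hr hv.out.le
      have hTb0 := cauchyT_nonneg hb.le v
      rw [Real.norm_eq_abs, abs_of_nonneg (by positivity)]
      have hTE : π^2*(z/r)^2/Real.log (z/r)
          * (∫ x in Ioi (0:ℝ), x * cauchyDensity x * cauchyDensityT r (x*z)) ≤ 2/r := by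
        rw [E_formula hr hz]
        have h6 : (0:ℝ) < z^2 - r^2 := by nlinarith
        have hlog : Real.log (z/r) ≠ 0 := (log_div_pos hr hz).ne'
        have hπ : (π:ℝ) ≠ 0 := pi_ne_zero
        have hRHS : π^2*(z/r)^2/Real.log (z/r) * (r*Real.log (z/r)/(π^2*(z^2-r^2)))
            = z^2/(r*(z^2-r^2)) := by
          field_simp
        rw [hRHS, div_le_div_iff₀ (mul_pos hr h6) hr]
        nlinarith [mul_nonneg (sub_nonneg.2 hz2) (show (0:ℝ) ≤ z + 2*r by linarith)]
      have hTG : π^2*(z/r)^2/Real.log (z/r)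
          * (∫ x in Ioi (0:ℝ), x * cauchyDensity x * cauchyDensityT r (x*z+v)) ≤ 2/r :=
        le_trans (mul_le_mul_of_nonneg_left (G_val_le hr hz hv.out.le) hT0) hTE
      calc π^2*(z/r)^2/Real.log (z/r)
            * ((∫ x in Ioi (0:ℝ), x * cauchyDensity x * cauchyDensityT r (x*z+v))
              * cauchyDensityT b v)
          = (π^2*(z/r)^2/Real.log (z/r)
              * (∫ x in Ioi (0:ℝ), x * cauchyDensity x * cauchyDensityT r (x*z+v)))
            * cauchyDensityT b v := by ring
        _ ≤ (2/r) * cauchyDensityT b v := mul_le_mul_of_nonneg_right hTG hTb0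
    · exact (integrableOn_cauchyT hb).const_mul _
    · rw [ae_restrict_iff' measurableSet_Ioi]
      filter_upwards with v hv
      have := (limG hr v hv.out.le).mul_const (cauchyDensityT b v)
      exact this.congr (fun z => mul_assoc _ _ _)
  have hval : (∫ v in Ioi (0:ℝ), (1/r) * cauchyDensityT b v) = 1/(2*r) := by
    rw [integral_const_mul, integral_cauchyT hb]
    ring
  rw [← hval]
  refine key.congr ?_
  intro z
  show (∫ v in Ioi (0:ℝ), π^2*(z/r)^2/Real.log (z/r)
      * ((∫ x in Ioi (0:ℝ), x * cauchyDensity x * cauchyDensityT r (x*z+v))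
          * cauchyDensityT b v))
      = π^2*(z/r)^2/Real.log (z/r)
        * ∫ v in Ioi (0:ℝ), (∫ x in Ioi (0:ℝ), x * cauchyDensity x * cauchyDensityT r (x*z+v))
            * cauchyDensityT b v
  exact integral_const_mul _ _

theorem stmt7 (r s : ℝ) (hr : 0 < r) (hrs : r < s) (hs : s ≤ 1) :
    Tendsto (fun z : ℝ =>
        (π ^ 2 * (z / r) ^ 2 / Real.log (z / r)) *
          ∫ x in Set.Ioi (0:ℝ), x * cauchyDensity x * cauchyRho r s (x * z))
      atTop (nhds (1 / r)) := by
  have hb : 0 < s - r := by linarith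
  have h := ((limT_E hr).const_mul (1/2:ℝ)).add (limDCT hr hb)
  have hval : (1/2:ℝ) * (1/r) + 1/(2*r) = 1/r := by ring
  rw [hval] at h
  refine h.congr' ?_
  filter_upwards [eventually_gt_atTop r] with z hz
  rw [split_eq hr hz hb]
  ring
end

section
/- Let α = 1, so that f_1(x) = 1/(π(1+x²)) and f_D(x) = x^{−2} g_1((x^{−1}−1)) with g_1(b) = 4∫₀^∞ y f_1(y) f_1(by) dy. Then for every 0 < x < 1 with x ≠ 1/2, f_D(x) = (4/π²) · (1−2x)^{−1} · log(x^{−1} − 1). -/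
open MeasureTheory Real Filter Topology

lemma cauchy_key (b : ℝ) (hb : 0 < b) (hb1 : b ≠ 1) :
    ∫ y in Set.Ioi (0:ℝ), y * cauchyDensity y * cauchyDensity (b * y)
      = Real.log b / (π ^ 2 * (b ^ 2 - 1)) := by
  have hπ : (π : ℝ) ≠ 0 := Real.pi_ne_zero
  have hbne : b ^ 2 - 1 ≠ 0 := by
    intro h
    have : b ^ 2 = 1 := by linarith
    have : b = 1 := by nlinarith
    exact hb1 this
  set c : ℝ := 1 / (2 * π ^ 2 * (b ^ 2 - 1)) with hc
  set F : ℝ → ℝ := fun y => c * (Real.log (1 + b ^ 2 * y ^ 2) - Real.log (1 + y ^ 2)) with hF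
  have hpos1 : ∀ y : ℝ, (0:ℝ) < 1 + b ^ 2 * y ^ 2 := fun y => by positivity
  have hpos2 : ∀ y : ℝ, (0:ℝ) < 1 + y ^ 2 := fun y => by positivity
  have hderiv : ∀ y ∈ Set.Ici (0:ℝ),
      HasDerivAt F (y * cauchyDensity y * cauchyDensity (b * y)) y := by
    intro y _
    have h1 : HasDerivAt (fun y : ℝ => 1 + b ^ 2 * y ^ 2) (b ^ 2 * (2 * y)) y := by
      simpa using ((hasDerivAt_pow 2 y).const_mul (b ^ 2)).const_add 1
    have h2 : HasDerivAt (fun y : ℝ => 1 + y ^ 2) (2 * y) y := by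
      simpa using (hasDerivAt_pow 2 y).const_add 1
    have h3 : HasDerivAt F (c * (b ^ 2 * (2 * y) / (1 + b ^ 2 * y ^ 2) - 2 * y / (1 + y ^ 2))) y :=
      ((h1.log (hpos1 y).ne').sub (h2.log (hpos2 y).ne')).const_mul c
    convert h3 using 1
    simp only [cauchyDensity, hc]
    rw [mul_pow]
    field_simp
    ring
  have hne0 : b ^ 2 ≠ 0 := by positivity
  have htend : Tendsto F atTop (𝓝 (c * Real.log (b ^ 2))) := by
    have h0 : Tendsto (fun y : ℝ => b ^ 2 + (1 - b ^ 2) / (1 + y ^ 2)) atTop (𝓝 (b ^ 2)) := by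
      have : Tendsto (fun y : ℝ => (1 - b ^ 2) / (1 + y ^ 2)) atTop (𝓝 0) := by
        apply Tendsto.div_atTop tendsto_const_nhds
        exact tendsto_atTop_add_const_left _ 1 (tendsto_pow_atTop two_ne_zero)
      simpa using (tendsto_const_nhds.add this)
    have hcomp := ((Real.continuousAt_log hne0).tendsto.comp h0).const_mul c
    refine hcomp.congr fun y => ?_
    have hy1 := hpos1 y
    have hy2 := hpos2 y
    show c * Real.log (b ^ 2 + (1 - b ^ 2) / (1 + y ^ 2))
        = c * (Real.log (1 + b ^ 2 * y ^ 2) - Real.log (1 + y ^ 2))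
    rw [← Real.log_div hy1.ne' hy2.ne',
      show b ^ 2 + (1 - b ^ 2) / (1 + y ^ 2) = (1 + b ^ 2 * y ^ 2) / (1 + y ^ 2) from by
        field_simp; ring]
  have hg : ∀ y ∈ Set.Ioi (0:ℝ), 0 ≤ y * cauchyDensity y * cauchyDensity (b * y) := by
    intro y hy
    have : (0:ℝ) < y := hy
    have h1 : 0 ≤ cauchyDensity y := by
      unfold cauchyDensity; positivity
    have h2 : 0 ≤ cauchyDensity (b * y) := by
      unfold cauchyDensity; positivity
    positivity
  have := integral_Ioi_of_hasDerivAt_of_nonneg' (g := F) hderiv hg htend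
  rw [this]
  have hF0 : F 0 = 0 := by simp [hF]
  rw [hF0, Real.log_pow]
  push_cast
  rw [hc]
  field_simp
  ring

theorem stmt10 (x : ℝ) (hx0 : 0 < x) (hx1 : x < 1) (hx : x ≠ 1/2) :
    (x ^ 2)⁻¹ *
        (4 * ∫ y in Set.Ioi (0:ℝ), y * cauchyDensity y * cauchyDensity ((x⁻¹ - 1) * y))
      = (4 / π ^ 2) * (1 - 2 * x)⁻¹ * Real.log (x⁻¹ - 1) := by
  have hπ : (π : ℝ) ≠ 0 := Real.pi_ne_zero
  have hxne : x ≠ 0 := hx0.ne'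
  have hb : 0 < x⁻¹ - 1 := by
    have : 1 < x⁻¹ := (one_lt_inv₀ hx0).2 hx1
    linarith
  have hb1 : x⁻¹ - 1 ≠ 1 := by
    intro h
    apply hx
    field_simp at h
    linarith
  rw [cauchy_key _ hb hb1]
  have h2x : 1 - 2 * x ≠ 0 := by
    intro h; apply hx; linarith
  have hden : (x⁻¹ - 1) ^ 2 - 1 = (1 - 2 * x) / x ^ 2 := by
    field_simp
    ring
  rw [hden]
  field_simp
end

section
/- With ψ(x) = (x − ⌊x⌋) − (x − ⌊x⌋)², one has lim_{n→∞} (1/log n) · ∫_0^{n/2} ψ(x) / (x(1 − x/n)) dx = 1/6, where the limit is over integers n → ∞. -/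
open MeasureTheory Real Filter intervalIntegral

lemma psi_eq (x : ℝ) : psi x = Int.fract x - (Int.fract x)^2 := by
  unfold psi Int.fract; ring

lemma psi_nonneg (x : ℝ) : 0 ≤ psi x := by
  rw [psi_eq]
  have h1 := Int.fract_nonneg x
  have h2 := Int.fract_lt_one x
  nlinarith

lemma psi_le_quarter (x : ℝ) : psi x ≤ 1/4 := by
  rw [psi_eq]
  nlinarith [sq_nonneg (Int.fract x - 1/2)]

lemma psi_le_self {x : ℝ} (hx : 0 ≤ x) : psi x ≤ x := by
  rw [psi_eq]
  have h1 := Int.fract_nonneg x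
  have h2 : Int.fract x ≤ x := by
    rw [Int.fract]
    have : (0:ℝ) ≤ ⌊x⌋ := by exact_mod_cast Int.floor_nonneg.mpr hx
    linarith
  nlinarith

lemma psi_meas : Measurable psi := by
  have h : Measurable fun x : ℝ => Int.fract x := measurable_fract
  have e : psi = fun x => Int.fract x - (Int.fract x)^2 := funext psi_eq
  rw [e]
  exact h.sub (h.pow_const 2)

lemma ii_of_bdd {f : ℝ → ℝ} {a b C : ℝ} (hm : Measurable f)
    (hC : ∀ x ∈ Set.uIoc a b, |f x| ≤ C) : IntervalIntegrable f volume a b := by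
  apply (_root_.intervalIntegrable_const (c := C)).mono_fun
    hm.aestronglyMeasurable.restrict
  refine (ae_restrict_iff' measurableSet_uIoc).mpr (ae_of_all _ fun x hx => ?_)
  simpa [Real.norm_eq_abs, abs_of_nonneg ((abs_nonneg (f x)).trans (hC x hx))] using hC x hx

lemma integral_psi_unit (k : ℕ) : ∫ x in (k:ℝ)..(k+1), psi x = 1/6 := by
  have hcong : ∀ x ∈ Set.uIoc (k:ℝ) (k+1), psi x = (x - k) - (x - k)^2 := by
    intro x hx
    rw [Set.uIoc_of_le (by linarith : (k:ℝ) ≤ k+1)] at hx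
    obtain ⟨h1, h2⟩ := hx
    rcases eq_or_lt_of_le h2 with h | h
    · subst h
      unfold psi
      have : ⌊(k:ℝ)+1⌋ = (k:ℝ)+1 := by
        rw [show ((k:ℝ)+1) = ((k+1 : ℕ) : ℝ) by push_cast; ring, Int.floor_natCast]
        push_cast; ring
      rw [this]; ring
    · unfold psi
      have : ⌊x⌋ = (k : ℤ) := by
        apply Int.floor_eq_iff.mpr
        constructor <;> [exact_mod_cast h1.le; exact_mod_cast h]
      rw [this]; push_cast; ring
  rw [integral_congr_ae (ae_of_all _ hcong)]
  have h := intervalIntegral.integral_comp_sub_right (a := (k:ℝ)) (b := (k:ℝ)+1)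
    (fun x => x - x^2) (k:ℝ)
  simp only [add_sub_cancel_left, sub_self] at h
  rw [h, intervalIntegral.integral_sub intervalIntegrable_id
    ((continuous_pow 2).intervalIntegrable 0 1), integral_id, integral_pow]
  norm_num

lemma g_abs {x : ℝ} (hx : 0 ≤ x) : |psi x / x| ≤ 1 := by
  rcases eq_or_lt_of_le hx with h | h
  · simp [← h]
  · rw [abs_of_nonneg (div_nonneg (psi_nonneg x) hx)]
    rw [div_le_one h]
    exact psi_le_self hx

lemma g_int {a b : ℝ} (ha : 0 ≤ a) (hb : 0 ≤ b) :
    IntervalIntegrable (fun x => psi x / x) volume a b := by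
  apply ii_of_bdd (psi_meas.div measurable_id)
  intro x hx
  have : min a b < x := hx.1
  exact g_abs (le_trans (le_min ha hb) this.le)

lemma psi_int (a b : ℝ) : IntervalIntegrable psi volume a b := by
  apply ii_of_bdd (C := 1/4) psi_meas
  intro x _
  rw [abs_of_nonneg (psi_nonneg x)]
  exact psi_le_quarter x

lemma unit_upper (k : ℕ) (hk : 1 ≤ k) :
    ∫ x in (k:ℝ)..(k+1), psi x / x ≤ (1/6) * (1/k) := by
  have hk0 : (0:ℝ) < k := by exact_mod_cast hk
  have h1 : ∫ x in (k:ℝ)..(k+1), psi x / x ≤ ∫ x in (k:ℝ)..(k+1), psi x / k := by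
    apply integral_mono_on (by linarith) (g_int hk0.le (by linarith)) ((psi_int _ _).div_const _)
    intro x hx
    have hx1 : (k:ℝ) ≤ x := hx.1
    gcongr
    · exact psi_nonneg x
  calc _ ≤ ∫ x in (k:ℝ)..(k+1), psi x / k := h1
    _ = (1/6) * (1/k) := by rw [intervalIntegral.integral_div, integral_psi_unit]; ring

lemma unit_lower (k : ℕ) :
    (1/6) * (1/(k+1)) ≤ ∫ x in (k:ℝ)..(k+1), psi x / x := by
  have hk0 : (0:ℝ) ≤ k := Nat.cast_nonneg k
  have h1 : ∫ x in (k:ℝ)..(k+1), psi x / (k+1) ≤ ∫ x in (k:ℝ)..(k+1), psi x / x := by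
    apply integral_mono_on (by linarith) ((psi_int _ _).div_const _) (g_int hk0 (by linarith))
    intro x hx
    have hx1 : (k:ℝ) ≤ x := hx.1
    have hx2 : x ≤ (k:ℝ)+1 := hx.2
    rcases eq_or_lt_of_le hx1 with h | h
    · rcases Nat.eq_zero_or_pos k with h0 | h0
      · subst h0; simp at h; simp [← h, psi]
      · have : (0:ℝ) < k := by exact_mod_cast h0
        gcongr
        · exact psi_nonneg x
        · linarith
    · gcongr
      · exact psi_nonneg x
      · linarith
  calc (1/6) * (1/((k:ℝ)+1)) = ∫ x in (k:ℝ)..(k+1), psi x / (k+1) := by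
        rw [intervalIntegral.integral_div, integral_psi_unit]; ring
    _ ≤ _ := h1

lemma log_ineq_upper {m : ℝ} (hm : 0 < m) : Real.log (m+1) - Real.log m ≤ 1/m := by
  have h := Real.log_le_sub_one_of_pos (show (0:ℝ) < (m+1)/m by positivity)
  rw [Real.log_div (by linarith) hm.ne'] at h
  have : (m+1)/m - 1 = 1/m := by field_simp; ring
  linarith [this ▸ h]

lemma log_ineq_lower {m : ℝ} (hm : 0 < m) : 1/(m+1) ≤ Real.log (m+1) - Real.log m := by
  have h := Real.log_le_sub_one_of_pos (show (0:ℝ) < m/(m+1) by positivity)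
  rw [Real.log_div hm.ne' (by linarith)] at h
  have e : m/(m+1) - 1 = -(1/(m+1)) := by field_simp; ring
  rw [e] at h
  linarith

lemma S_split (a : ℝ) (m : ℕ) (ha : 0 ≤ a) (ham : a ≤ m) :
    ∫ x in a..((m:ℝ)+1), psi x / x =
      (∫ x in a..(m:ℝ), psi x / x) + ∫ x in (m:ℝ)..((m:ℝ)+1), psi x / x := by
  rw [integral_add_adjacent_intervals (g_int ha (Nat.cast_nonneg m))
    (g_int (Nat.cast_nonneg m) (by positivity))]

lemma S_upper : ∀ m : ℕ, 1 ≤ m →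
    ∫ x in (1:ℝ)..((m:ℝ)+1), psi x / x ≤ 1/6 + (1/6) * Real.log m := by
  intro m hm
  induction m with
  | zero => omega
  | succ p ih =>
    rcases Nat.eq_zero_or_pos p with h0 | h0
    · subst h0
      have := unit_upper 1 le_rfl
      norm_num at this ⊢
      linarith
    · have hp : (0:ℝ) < p := by exact_mod_cast h0
      have hsplit := S_split 1 (p+1) (by norm_num) (by push_cast; linarith)
      push_cast
      push_cast at hsplit ih
      rw [hsplit]
      have h1 := unit_upper (p+1) (by omega)
      push_cast at h1
      have h2 := log_ineq_lower hp
      have := ih h0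
      linarith

lemma S_lower : ∀ m : ℕ, 1 ≤ m →
    (1/6) * (Real.log ((m:ℝ)+1) - Real.log 2) ≤ ∫ x in (1:ℝ)..(m:ℝ), psi x / x := by
  intro m hm
  induction m with
  | zero => omega
  | succ p ih =>
    rcases Nat.eq_zero_or_pos p with h0 | h0
    · subst h0; norm_num
    · have hp : (0:ℝ) < p := by exact_mod_cast h0
      have hsplit := S_split 1 p (by norm_num) (by exact_mod_cast h0)
      push_cast
      push_cast at hsplit ih
      rw [hsplit]
      have h1 := unit_lower p
      push_cast at h1
      have h2 := log_ineq_upper (show (0:ℝ) < p + 1 by linarith)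
      have := ih h0
      linarith

lemma integral_g_zero_one : ∫ x in (0:ℝ)..1, psi x / x = 1/2 := by
  have hcong : ∀ x ∈ Set.uIoc (0:ℝ) 1, psi x / x = 1 - x := by
    intro x hx
    rw [Set.uIoc_of_le (by norm_num : (0:ℝ) ≤ 1)] at hx
    obtain ⟨h1, h2⟩ := hx
    rcases eq_or_lt_of_le h2 with h | h
    · subst h; norm_num [psi]
    · have hfl : ⌊x⌋ = 0 := Int.floor_eq_zero_iff.mpr ⟨h1.le, h⟩
      unfold psi
      rw [hfl]
      push_cast
      field_simp
      ring
  rw [integral_congr_ae (ae_of_all _ hcong)]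
  rw [intervalIntegral.integral_sub intervalIntegrable_const intervalIntegrable_id,
    intervalIntegral.integral_const, integral_id]
  norm_num

-- decomposition and B bound
lemma decomp (n : ℕ) (hn : 2 ≤ n) (x : ℝ) (hx : x ∈ Set.uIcc (0:ℝ) (n/2)) :
    psi x / (x * (1 - x / n)) = psi x / x + psi x / (n - x) := by
  have hn0 : (0:ℝ) < n := by exact_mod_cast (show 0 < n by omega)
  rw [Set.uIcc_of_le (by positivity)] at hx
  obtain ⟨h1, h2⟩ := hx
  rcases eq_or_lt_of_le h1 with h | h
  · have hpsi0 : psi 0 = 0 := by norm_num [psi]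
    rw [← h, hpsi0]; simp
  · have hnx : (0:ℝ) < (n:ℝ) - x := by linarith
    field_simp
    ring
lemma h_int (n : ℕ) (hn : 2 ≤ n) :
    IntervalIntegrable (fun x => psi x / ((n:ℝ) - x)) volume 0 ((n:ℝ)/2) := by
  have hn0 : (0:ℝ) < n := by exact_mod_cast (show 0 < n by omega)
  apply ii_of_bdd (C := 1/2) (psi_meas.div (measurable_const.sub measurable_id))
  intro x hx
  simp only [Pi.div_apply, Pi.sub_apply, id_eq]
  rw [Set.uIoc_of_le (by positivity)] at hx
  have h2 : x ≤ (n:ℝ)/2 := hx.2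
  have hnx : (1:ℝ) ≤ (n:ℝ) - x := by
    have : (2:ℝ) ≤ n := by exact_mod_cast hn
    linarith
  rw [abs_of_nonneg (div_nonneg (psi_nonneg x) (by linarith))]
  rw [div_le_iff₀ (by linarith)]
  nlinarith [psi_le_quarter x]

lemma B_bounds (n : ℕ) (hn : 2 ≤ n) :
    0 ≤ (∫ x in (0:ℝ)..((n:ℝ)/2), psi x / ((n:ℝ) - x)) ∧
    (∫ x in (0:ℝ)..((n:ℝ)/2), psi x / ((n:ℝ) - x)) ≤ 1/4 := by
  have hn0 : (0:ℝ) < n := by exact_mod_cast (show 0 < n by omega)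
  constructor
  · apply integral_nonneg (by positivity)
    intro x hx
    have : x ≤ (n:ℝ)/2 := hx.2
    exact div_nonneg (psi_nonneg x) (by linarith)
  · have hmono : (∫ x in (0:ℝ)..((n:ℝ)/2), psi x / ((n:ℝ) - x)) ≤
        ∫ _x in (0:ℝ)..((n:ℝ)/2), (1/4) / ((n:ℝ)/2) := by
      apply integral_mono_on (by positivity) (h_int n hn) intervalIntegrable_const
      intro x hx
      obtain ⟨h1, h2⟩ := hx
      have hnx : (0:ℝ) < (n:ℝ) - x := by linarith
      apply div_le_div₀ (by norm_num) (psi_le_quarter x) (by positivity) (by linarith)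
    rw [intervalIntegral.integral_const, smul_eq_mul] at hmono
    calc _ ≤ ((n:ℝ)/2 - 0) * ((1/4) / ((n:ℝ)/2)) := hmono
      _ = 1/4 := by field_simp; ring

lemma g_nonneg_on {a b : ℝ} (ha : 0 ≤ a) :
    ∀ x ∈ Set.Ioc a b, 0 ≤ psi x / x := fun x hx =>
  div_nonneg (psi_nonneg x) (le_trans ha hx.1.le)

lemma A_bounds (n : ℕ) (hn : 2 ≤ n) :
    (1/6) * Real.log n - 1 ≤ (∫ x in (0:ℝ)..((n:ℝ)/2), psi x / x) ∧
    (∫ x in (0:ℝ)..((n:ℝ)/2), psi x / x) ≤ (1/6) * Real.log n + 1 := by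
  set m : ℕ := n / 2 with hm
  have hm1 : 1 ≤ m := by omega
  have hmn : 2 * m ≤ n := by omega
  have hnm : n ≤ 2 * m + 1 := by omega
  have hmr : (m:ℝ) ≤ (n:ℝ)/2 := by
    have : ((2*m : ℕ):ℝ) ≤ n := by exact_mod_cast hmn
    push_cast at this; linarith
  have hnr : (n:ℝ)/2 ≤ (m:ℝ) + 1 := by
    have : ((n:ℕ):ℝ) ≤ ((2*m+1 : ℕ):ℝ) := by exact_mod_cast hnm
    push_cast at this; linarith
  have hm0 : (1:ℝ) ≤ m := by exact_mod_cast hm1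
  have hn2 : (2:ℝ) ≤ n := by exact_mod_cast hn
  have hsplit : (∫ x in (0:ℝ)..((n:ℝ)/2), psi x / x) =
      (∫ x in (0:ℝ)..1, psi x / x) + ∫ x in (1:ℝ)..((n:ℝ)/2), psi x / x := by
    rw [integral_add_adjacent_intervals (g_int le_rfl zero_le_one)
      (g_int zero_le_one (by positivity))]
  -- monotonicity of the tail
  have hup : (∫ x in (1:ℝ)..((n:ℝ)/2), psi x / x) ≤ ∫ x in (1:ℝ)..((m:ℝ)+1), psi x / x := by
    have hadd := integral_add_adjacent_intervals (μ := volume)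
      (g_int zero_le_one (by positivity : (0:ℝ) ≤ (n:ℝ)/2))
      (g_int (by positivity : (0:ℝ) ≤ (n:ℝ)/2) (by positivity : (0:ℝ) ≤ (m:ℝ)+1))
    have hpos : 0 ≤ ∫ x in ((n:ℝ)/2)..((m:ℝ)+1), psi x / x := by
      apply integral_nonneg (by assumption)
      intro x hx
      exact div_nonneg (psi_nonneg x) (by linarith [hx.1])
    linarith [hadd]
  have hlo : (∫ x in (1:ℝ)..(m:ℝ), psi x / x) ≤ ∫ x in (1:ℝ)..((n:ℝ)/2), psi x / x := by
    have hadd := integral_add_adjacent_intervals (μ := volume)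
      (g_int zero_le_one (by positivity : (0:ℝ) ≤ (m:ℝ)))
      (g_int (by positivity : (0:ℝ) ≤ (m:ℝ)) (by positivity : (0:ℝ) ≤ (n:ℝ)/2))
    have hpos : 0 ≤ ∫ x in (m:ℝ)..((n:ℝ)/2), psi x / x := by
      apply integral_nonneg (by linarith)
      intro x hx
      exact div_nonneg (psi_nonneg x) (by linarith [hx.1])
    linarith [hadd]
  have hSu := S_upper m hm1
  have hSl := S_lower m hm1
  have hlogm : Real.log m ≤ Real.log n := by
    apply Real.log_le_log (by linarith)
    calc (m:ℝ) ≤ (n:ℝ)/2 := hmr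
      _ ≤ n := by linarith
  have hlogm1 : Real.log ((n:ℝ)/2) ≤ Real.log ((m:ℝ)+1) :=
    Real.log_le_log (by positivity) hnr
  have hlogdiv : Real.log ((n:ℝ)/2) = Real.log n - Real.log 2 :=
    Real.log_div (by positivity) (by norm_num)
  have hlog2 : Real.log 2 ≤ 1 := by
    calc Real.log 2 ≤ 2 - 1 := Real.log_le_sub_one_of_pos (by norm_num)
      _ = 1 := by norm_num
  have hlog2' : (0:ℝ) < Real.log 2 := Real.log_pos (by norm_num)
  constructor
  · rw [hsplit, integral_g_zero_one]
    have : (1/6) * (Real.log ((m:ℝ)+1) - Real.log 2) ≥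
        (1/6) * (Real.log n - 2 * Real.log 2) := by
      nlinarith [hlogdiv ▸ hlogm1]
    nlinarith
  · rw [hsplit, integral_g_zero_one]
    nlinarith

lemma I_bounds (n : ℕ) (hn : 2 ≤ n) :
    (1/6) * Real.log n - 2 ≤ (∫ x in (0:ℝ)..((n:ℝ)/2), psi x / (x * (1 - x / n))) ∧
    (∫ x in (0:ℝ)..((n:ℝ)/2), psi x / (x * (1 - x / n))) ≤ (1/6) * Real.log n + 2 := by
  have hcong := intervalIntegral.integral_congr (μ := volume)
    (f := fun x => psi x / (x * (1 - x / n)))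
    (g := fun x => psi x / x + psi x / ((n:ℝ) - x)) (fun x hx => decomp n hn x hx)
  have hadd : (∫ x in (0:ℝ)..((n:ℝ)/2), (psi x / x + psi x / ((n:ℝ) - x))) =
      (∫ x in (0:ℝ)..((n:ℝ)/2), psi x / x) +
      ∫ x in (0:ℝ)..((n:ℝ)/2), psi x / ((n:ℝ) - x) :=
    intervalIntegral.integral_add (g_int le_rfl (by positivity)) (h_int n hn)
  obtain ⟨hA1, hA2⟩ := A_bounds n hn
  obtain ⟨hB1, hB2⟩ := B_bounds n hn
  rw [hcong, hadd]
  constructor <;> linarith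

theorem stmt11 :
    Tendsto (fun n : ℕ =>
        (Real.log n)⁻¹ * ∫ x in (0:ℝ)..(n / 2), psi x / (x * (1 - x / n)))
      atTop (nhds (1/6)) := by
  have hinv : Tendsto (fun n : ℕ => (Real.log n)⁻¹) atTop (nhds 0) :=
    (Real.tendsto_log_atTop.comp tendsto_natCast_atTop_atTop).inv_tendsto_atTop
  have hlo : Tendsto (fun n : ℕ => 1/6 - 2 * (Real.log n)⁻¹) atTop (nhds (1/6)) := by
    have := tendsto_const_nhds (α := ℕ) (f := atTop) (x := (1/6 : ℝ)) |>.sub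
      ((hinv.const_mul 2))
    simpa using this
  have hhi : Tendsto (fun n : ℕ => 1/6 + 2 * (Real.log n)⁻¹) atTop (nhds (1/6)) := by
    have := tendsto_const_nhds (α := ℕ) (f := atTop) (x := (1/6 : ℝ)) |>.add
      ((hinv.const_mul 2))
    simpa using this
  apply tendsto_of_tendsto_of_tendsto_of_le_of_le' hlo hhi
  · filter_upwards [eventually_ge_atTop 2] with n hn
    obtain ⟨h1, _⟩ := I_bounds n hn
    have hL : (0:ℝ) < Real.log n := by
      apply Real.log_pos
      have : (2:ℝ) ≤ n := by exact_mod_cast hn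
      linarith
    set L := Real.log n
    set I := ∫ x in (0:ℝ)..((n:ℝ)/2), psi x / (x * (1 - x / n))
    have := mul_le_mul_of_nonneg_left h1 (inv_nonneg.mpr hL.le)
    have hc : L⁻¹ * L = 1 := inv_mul_cancel₀ hL.ne'
    have e : L⁻¹ * ((1/6)*L - 2) = 1/6 - 2*L⁻¹ := by linear_combination (1/6) * hc
    rw [e] at this
    exact this
  · filter_upwards [eventually_ge_atTop 2] with n hn
    obtain ⟨_, h2⟩ := I_bounds n hn
    have hL : (0:ℝ) < Real.log n := by
      apply Real.log_pos
      have : (2:ℝ) ≤ n := by exact_mod_cast hn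
      linarith
    set L := Real.log n
    set I := ∫ x in (0:ℝ)..((n:ℝ)/2), psi x / (x * (1 - x / n))
    have := mul_le_mul_of_nonneg_left h2 (inv_nonneg.mpr hL.le)
    have hc : L⁻¹ * L = 1 := inv_mul_cancel₀ hL.ne'
    have e : L⁻¹ * ((1/6)*L + 2) = 1/6 + 2*L⁻¹ := by linear_combination (1/6) * hc
    rw [e] at this
    exact this
end

section
/- Let g₁(a,b) be as defined below. Then: (i) for every b > 0 with b ≠ 1, g₁(0,b) = log b / (π²(b²−1)); (ii) for every a ≥ 0 and b > 0 with b ≠ 1, g₁(a,b) ≤ log b / (π²(b²−1)); (iii) for every fixed a ≥ 0, lim_{b→∞} (π² b² / log b) · g₁(a,b) = 1. -/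
open MeasureTheory Real Filter

noncomputable def g1 (a b : ℝ) : ℝ :=
  (1 / π ^ 2) * ∫ x in Set.Ioi (0:ℝ), x / ((1 + x ^ 2) * (1 + (a + b * x) ^ 2))

open Set Topology

set_option maxHeartbeats 1000000

lemma key14 (C D : ℝ) (hC : 0 < C) (hD : 0 < D) (hne : D ≠ C) :
    IntegrableOn (fun x => x / ((1 + x ^ 2) * (C + D * x ^ 2))) (Ioi (0:ℝ)) ∧
    ∫ x in Ioi (0:ℝ), x / ((1 + x ^ 2) * (C + D * x ^ 2))
      = Real.log (D / C) / (2 * (D - C)) := by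
  have hDC : D - C ≠ 0 := sub_ne_zero.mpr hne
  set F : ℝ → ℝ := fun x => (Real.log (C + D * x ^ 2) - Real.log (1 + x ^ 2)) / (2 * (D - C))
    with hF
  have hderiv : ∀ x ∈ Ici (0:ℝ), HasDerivAt F (x / ((1 + x ^ 2) * (C + D * x ^ 2))) x := by
    intro x hx
    have h1 : (0:ℝ) < C + D * x ^ 2 := by positivity
    have h2 : (0:ℝ) < 1 + x ^ 2 := by positivity
    have d1 : HasDerivAt (fun x : ℝ => C + D * x ^ 2) (D * (2 * x)) x := by
      simpa using ((hasDerivAt_pow 2 x).const_mul D).const_add C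
    have d2 : HasDerivAt (fun x : ℝ => 1 + x ^ 2) (2 * x) x := by
      simpa using (hasDerivAt_pow 2 x).const_add 1
    have l1 := (Real.hasDerivAt_log h1.ne').comp x d1
    have l2 := (Real.hasDerivAt_log h2.ne').comp x d2
    have := (l1.sub l2).div_const (2 * (D - C))
    refine this.congr_deriv ?_
    field_simp
    ring
  have hpos : ∀ x ∈ Ioi (0:ℝ), 0 ≤ x / ((1 + x ^ 2) * (C + D * x ^ 2)) := by
    intro x hx
    have hx' : (0:ℝ) < x := hx
    positivity
  have hratio : Tendsto (fun x : ℝ => (C + D * x ^ 2) / (1 + x ^ 2)) atTop (𝓝 D) := by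
    have hx2 : Tendsto (fun x : ℝ => (x ^ 2)⁻¹) atTop (𝓝 0) :=
      (tendsto_pow_atTop two_ne_zero).inv_tendsto_atTop
    have base : Tendsto (fun x : ℝ => (C * (x ^ 2)⁻¹ + D) / ((x ^ 2)⁻¹ + 1)) atTop
        (𝓝 ((C * 0 + D) / (0 + 1))) :=
      Tendsto.div ((hx2.const_mul C).add tendsto_const_nhds)
        (hx2.add tendsto_const_nhds) (by norm_num)
    have h' : Tendsto (fun x : ℝ => (C * (x ^ 2)⁻¹ + D) / ((x ^ 2)⁻¹ + 1)) atTop (𝓝 D) := by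
      simpa using base
    refine h'.congr' ?_
    filter_upwards [eventually_ge_atTop (1:ℝ)] with x hx
    have hx0 : x ≠ 0 := by linarith
    field_simp
  have hlim : Tendsto F atTop (𝓝 (Real.log D / (2 * (D - C)))) := by
    have h' : Tendsto (fun x : ℝ => Real.log ((C + D * x ^ 2) / (1 + x ^ 2)) / (2 * (D - C)))
        atTop (𝓝 (Real.log D / (2 * (D - C)))) :=
      (((Real.continuousAt_log hD.ne').tendsto).comp hratio).div_const _
    refine h'.congr fun x => ?_
    have h1 : (0:ℝ) < C + D * x ^ 2 := by positivity
    have h2 : (0:ℝ) < 1 + x ^ 2 := by positivity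
    rw [Real.log_div h1.ne' h2.ne']
  constructor
  · exact integrableOn_Ioi_deriv_of_nonneg' hderiv hpos hlim
  · rw [integral_Ioi_of_hasDerivAt_of_nonneg' hderiv hpos hlim]
    simp only [hF]
    rw [Real.log_div hD.ne' hC.ne']
    norm_num
    ring

lemma sq_ne_one14 {b : ℝ} (hb : 0 < b) (hb1 : b ≠ 1) : b ^ 2 ≠ 1 := by
  intro h
  apply hb1
  nlinarith

lemma part1of14 (b : ℝ) (hb : 0 < b) (hb1 : b ≠ 1) :
    ∫ x in Ioi (0:ℝ), x / ((1 + x ^ 2) * (1 + b ^ 2 * x ^ 2))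
      = Real.log b / (b ^ 2 - 1) := by
  have hk := (key14 1 (b ^ 2) one_pos (by positivity) (sq_ne_one14 hb hb1)).2
  rw [hk, div_one, Real.log_pow]
  have h1 : b ^ 2 - 1 ≠ 0 := sub_ne_zero.mpr (sq_ne_one14 hb hb1)
  field_simp
  ring

lemma mid_cont14 (a b : ℝ) :
    Continuous (fun x : ℝ => x / ((1 + x ^ 2) * (1 + (a + b * x) ^ 2))) := by
  apply continuous_id.div (by fun_prop)
  intro x
  positivity

lemma mid_le_up14 (a b x : ℝ) (ha : 0 ≤ a) (hb : 0 < b) (hx : 0 < x) :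
    x / ((1 + x ^ 2) * (1 + (a + b * x) ^ 2)) ≤ x / ((1 + x ^ 2) * (1 + b ^ 2 * x ^ 2)) := by
  have h1 : (0:ℝ) < (1 + x ^ 2) * (1 + b ^ 2 * x ^ 2) := by positivity
  have h2 : (1 + x ^ 2) * (1 + b ^ 2 * x ^ 2) ≤ (1 + x ^ 2) * (1 + (a + b * x) ^ 2) := by
    nlinarith [sq_nonneg x, mul_nonneg (mul_nonneg ha hb.le) hx.le, sq_nonneg a,
      mul_nonneg (mul_nonneg (mul_nonneg ha hb.le) hx.le) (sq_nonneg x)]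
  exact div_le_div_of_nonneg_left hx.le h1 h2

lemma part2core14 (a b : ℝ) (ha : 0 ≤ a) (hb : 0 < b) (hb1 : b ≠ 1) :
    ∫ x in Ioi (0:ℝ), x / ((1 + x ^ 2) * (1 + (a + b * x) ^ 2))
      ≤ Real.log b / (b ^ 2 - 1) := by
  rw [← part1of14 b hb hb1]
  apply integral_mono_of_nonneg
  · refine (ae_restrict_iff' measurableSet_Ioi).2 (ae_of_all _ fun x hx => ?_)
    have hx' : (0:ℝ) < x := hx
    positivity
  · exact (key14 1 (b ^ 2) one_pos (by positivity) (sq_ne_one14 hb hb1)).1.congr_fun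
      (fun x _ => by ring_nf) measurableSet_Ioi |>.mono_set le_rfl
  · refine (ae_restrict_iff' measurableSet_Ioi).2 (ae_of_all _ fun x hx => ?_)
    exact mid_le_up14 a b x ha hb hx

lemma mid_integrable14 (a b : ℝ) (ha : 0 ≤ a) (hb : 0 < b) (hb1 : b ≠ 1) :
    IntegrableOn (fun x : ℝ => x / ((1 + x ^ 2) * (1 + (a + b * x) ^ 2))) (Ioi (0:ℝ)) := by
  have hup : IntegrableOn (fun x : ℝ => x / ((1 + x ^ 2) * (1 + b ^ 2 * x ^ 2))) (Ioi (0:ℝ)) :=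
    (key14 1 (b ^ 2) one_pos (by positivity) (sq_ne_one14 hb hb1)).1.congr_fun
      (fun x _ => by ring_nf) measurableSet_Ioi
  refine hup.mono' ((mid_cont14 a b).aestronglyMeasurable.restrict) ?_
  refine (ae_restrict_iff' measurableSet_Ioi).2 (ae_of_all _ fun x hx => ?_)
  have hx' : (0:ℝ) < x := hx
  have h0 : (0:ℝ) ≤ x / ((1 + x ^ 2) * (1 + (a + b * x) ^ 2)) := by positivity
  rw [Real.norm_of_nonneg h0]
  exact mid_le_up14 a b x ha hb hx'

noncomputable def Cf14 (a b : ℝ) : ℝ := 1 + a ^ 2 * (1 + Real.log b)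
noncomputable def Df14 (b : ℝ) : ℝ := b ^ 2 * (1 + (Real.log b)⁻¹)

lemma hlog114 : Tendsto (fun y : ℝ => Real.log (1 + y) / y) atTop (𝓝 0) := by
  have hlogdiv : Tendsto (fun b : ℝ => Real.log b / b) atTop (𝓝 0) :=
    Real.isLittleO_log_id_atTop.tendsto_div_nhds_zero
  have t1 : Tendsto (fun y : ℝ => Real.log (1 + y) / (1 + y)) atTop (𝓝 0) :=
    hlogdiv.comp (tendsto_atTop_add_const_left _ 1 tendsto_id)
  have t2 : Tendsto (fun y : ℝ => (1 + y) / y) atTop (𝓝 1) := by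
    have h : Tendsto (fun y : ℝ => y⁻¹ + 1) atTop (𝓝 (0 + 1)) :=
      tendsto_inv_atTop_zero.add tendsto_const_nhds
    refine (by simpa using h : Tendsto (fun y : ℝ => y⁻¹ + 1) atTop (𝓝 1)).congr' ?_
    filter_upwards [eventually_ge_atTop (1:ℝ)] with y hy
    have : y ≠ 0 := by linarith
    field_simp
  have := t1.mul t2
  rw [zero_mul] at this
  refine this.congr' ?_
  filter_upwards [eventually_ge_atTop (1:ℝ)] with y hy
  have h0 : (1:ℝ) + y ≠ 0 := by linarith
  have hy0 : y ≠ 0 := by linarith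
  field_simp

lemma log_ge_one14 {b : ℝ} (hb : 3 ≤ b) : 1 ≤ Real.log b := by
  rw [Real.le_log_iff_exp_le (by linarith)]
  nlinarith [Real.exp_one_lt_d9]

lemma hCb214 (a : ℝ) : Tendsto (fun b : ℝ => Cf14 a b / b ^ 2) atTop (𝓝 0) := by
  have hinv2 : Tendsto (fun b : ℝ => (b ^ 2)⁻¹) atTop (𝓝 0) :=
    (tendsto_pow_atTop two_ne_zero).inv_tendsto_atTop
  have hlogdiv : Tendsto (fun b : ℝ => Real.log b / b) atTop (𝓝 0) :=
    Real.isLittleO_log_id_atTop.tendsto_div_nhds_zero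
  have h : Tendsto (fun b : ℝ => (1 + a ^ 2) * (b ^ 2)⁻¹ + a ^ 2 * (Real.log b / b * b⁻¹))
      atTop (𝓝 ((1 + a ^ 2) * 0 + a ^ 2 * (0 * 0))) :=
    (hinv2.const_mul _).add ((hlogdiv.mul tendsto_inv_atTop_zero).const_mul _)
  refine (by simpa using h : Tendsto _ atTop (𝓝 (0:ℝ))).congr' ?_
  filter_upwards [eventually_ge_atTop (1:ℝ)] with b hb
  have hb0 : b ≠ 0 := by linarith
  simp only [Cf14]
  field_simp
  ring

lemma hphi14 (a : ℝ) :
    Tendsto (fun b : ℝ => 1 + (Real.log b)⁻¹ - Cf14 a b / b ^ 2) atTop (𝓝 1) := by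
  have hinvlog : Tendsto (fun b : ℝ => (Real.log b)⁻¹) atTop (𝓝 0) :=
    Real.tendsto_log_atTop.inv_tendsto_atTop
  have h1 : Tendsto (fun b : ℝ => (1:ℝ) + (Real.log b)⁻¹) atTop (𝓝 (1 + 0)) :=
    tendsto_const_nhds.add hinvlog
  have := h1.sub (hCb214 a)
  simpa using this

lemma DC_eq14 (a : ℝ) {b : ℝ} (hb0 : b ≠ 0) :
    Df14 b - Cf14 a b = b ^ 2 * (1 + (Real.log b)⁻¹ - Cf14 a b / b ^ 2) := by
  simp only [Df14]
  field_simp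

lemma hF114 (a : ℝ) : Tendsto (fun b : ℝ => b ^ 2 / (Df14 b - Cf14 a b)) atTop (𝓝 1) := by
  have h := ((hphi14 a).inv₀ one_ne_zero)
  rw [inv_one] at h
  refine h.congr' ?_
  filter_upwards [eventually_ge_atTop (3:ℝ),
    (hphi14 a).eventually (lt_mem_nhds (by norm_num : (0:ℝ) < 1))] with b hb hpos
  have hb0 : b ≠ 0 := by linarith
  rw [DC_eq14 a hb0, div_mul_eq_div_div, div_self (by positivity), one_div]

lemma term314 (a : ℝ) :
    Tendsto (fun b : ℝ => Real.log (Cf14 a b) / (2 * Real.log b)) atTop (𝓝 0) := by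
  have hinvlog : Tendsto (fun b : ℝ => (Real.log b)⁻¹) atTop (𝓝 0) :=
    Real.tendsto_log_atTop.inv_tendsto_atTop
  have hU : Tendsto (fun b : ℝ =>
      Real.log (1 + a ^ 2) * (2 * Real.log b)⁻¹ + Real.log (1 + Real.log b) / (2 * Real.log b))
      atTop (𝓝 0) := by
    have h2inv : Tendsto (fun b : ℝ => (2 * Real.log b)⁻¹) atTop (𝓝 0) := by
      have := hinvlog.div_const 2
      rw [zero_div] at this
      refine this.congr fun b => ?_
      rw [mul_inv]
      ring
    have hsecond : Tendsto (fun b : ℝ => Real.log (1 + Real.log b) / (2 * Real.log b))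
        atTop (𝓝 0) := by
      have := (hlog114.comp Real.tendsto_log_atTop).div_const 2
      rw [zero_div] at this
      refine this.congr fun b => ?_
      simp only [Function.comp]
      rw [div_div, mul_comm]
    have := (h2inv.const_mul (Real.log (1 + a ^ 2))).add hsecond
    simpa using this
  refine tendsto_of_tendsto_of_tendsto_of_le_of_le' tendsto_const_nhds hU ?_ ?_
  · filter_upwards [eventually_ge_atTop (3:ℝ)] with b hb
    have hL := log_ge_one14 hb
    have hC1 : (1:ℝ) ≤ Cf14 a b := by simp only [Cf14]; nlinarith [sq_nonneg a]
    have := Real.log_nonneg hC1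
    positivity
  · filter_upwards [eventually_ge_atTop (3:ℝ)] with b hb
    have hL := log_ge_one14 hb
    have hC1 : (1:ℝ) ≤ Cf14 a b := by simp only [Cf14]; nlinarith [sq_nonneg a]
    have hle : Cf14 a b ≤ (1 + a ^ 2) * (1 + Real.log b) := by
      simp only [Cf14]; nlinarith [sq_nonneg a]
    have hlog_le : Real.log (Cf14 a b) ≤ Real.log (1 + a ^ 2) + Real.log (1 + Real.log b) := by
      rw [← Real.log_mul (by positivity) (by positivity)]
      exact Real.log_le_log (by linarith) hle
    have h2L : (0:ℝ) < 2 * Real.log b := by linarith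
    have heq : Real.log (1 + a ^ 2) * (2 * Real.log b)⁻¹
        + Real.log (1 + Real.log b) / (2 * Real.log b)
        = (Real.log (1 + a ^ 2) + Real.log (1 + Real.log b)) / (2 * Real.log b) := by
      field_simp
    rw [heq]
    exact (div_le_div_iff_of_pos_right h2L).2 hlog_le

lemma hF214 (a : ℝ) :
    Tendsto (fun b : ℝ => Real.log (Df14 b / Cf14 a b) / (2 * Real.log b)) atTop (𝓝 1) := by
  have hinvlog : Tendsto (fun b : ℝ => (Real.log b)⁻¹) atTop (𝓝 0) :=
    Real.tendsto_log_atTop.inv_tendsto_atTop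
  have h2inv : Tendsto (fun b : ℝ => (2 * Real.log b)⁻¹) atTop (𝓝 0) := by
    have := hinvlog.div_const 2
    rw [zero_div] at this
    refine this.congr fun b => ?_
    rw [mul_inv]
    ring
  have h1 : Tendsto (fun b : ℝ => (1:ℝ) + (Real.log b)⁻¹) atTop (𝓝 (1 + 0)) :=
    tendsto_const_nhds.add hinvlog
  rw [add_zero] at h1
  have p1 : Tendsto (fun b : ℝ => Real.log (1 + (Real.log b)⁻¹)) atTop (𝓝 0) := by
    have := ((Real.continuousAt_log one_ne_zero).tendsto).comp h1
    simpa [Function.comp_def] using this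
  have term2 : Tendsto (fun b : ℝ => Real.log (1 + (Real.log b)⁻¹) / (2 * Real.log b))
      atTop (𝓝 0) := by
    have := p1.mul h2inv
    rw [zero_mul] at this
    exact this.congr fun b => (div_eq_mul_inv _ _).symm
  have hG : Tendsto (fun b : ℝ => 1 + Real.log (1 + (Real.log b)⁻¹) / (2 * Real.log b)
      - Real.log (Cf14 a b) / (2 * Real.log b)) atTop (𝓝 1) := by
    have hsum : Tendsto (fun b : ℝ => (1:ℝ) + Real.log (1 + (Real.log b)⁻¹) / (2 * Real.log b))
        atTop (𝓝 (1 + 0)) := tendsto_const_nhds.add term2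
    have := hsum.sub (term314 a)
    simpa using this
  refine hG.congr' ?_
  filter_upwards [eventually_ge_atTop (3:ℝ)] with b hb
  have hL := log_ge_one14 hb
  have hb0 : (0:ℝ) < b := by linarith
  have hLpos : (0:ℝ) < Real.log b := by linarith
  have h1p : (0:ℝ) < 1 + (Real.log b)⁻¹ := by positivity
  have hCpos : (0:ℝ) < Cf14 a b := by simp only [Cf14]; nlinarith [sq_nonneg a]
  have hDpos : (0:ℝ) < Df14 b := by simp only [Df14]; positivity
  have hlogD : Real.log (Df14 b) = 2 * Real.log b + Real.log (1 + (Real.log b)⁻¹) := by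
    simp only [Df14]
    rw [Real.log_mul (by positivity) h1p.ne', Real.log_pow]
    push_cast
    ring
  rw [Real.log_div hDpos.ne' hCpos.ne', hlogD]
  field_simp

lemma hUp14 : Tendsto (fun b : ℝ => b ^ 2 / (b ^ 2 - 1)) atTop (𝓝 1) := by
  have hinv2 : Tendsto (fun b : ℝ => (b ^ 2)⁻¹) atTop (𝓝 0) :=
    (tendsto_pow_atTop two_ne_zero).inv_tendsto_atTop
  have h1 : Tendsto (fun b : ℝ => (1:ℝ) - (b ^ 2)⁻¹) atTop (𝓝 (1 - 0)) :=
    tendsto_const_nhds.sub hinv2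
  rw [sub_zero] at h1
  have h := h1.inv₀ one_ne_zero
  rw [inv_one] at h
  refine h.congr' ?_
  filter_upwards [eventually_ge_atTop (3:ℝ)] with b hb
  have hb0 : b ≠ 0 := by linarith
  have hb21 : b ^ 2 - 1 ≠ 0 := by nlinarith
  field_simp

lemma part3of14 (a : ℝ) (ha : 0 ≤ a) :
    Tendsto (fun b : ℝ => π ^ 2 * b ^ 2 / Real.log b * g1 a b) atTop (𝓝 1) := by
  have hLo : Tendsto (fun b : ℝ =>
      b ^ 2 / (Df14 b - Cf14 a b) * (Real.log (Df14 b / Cf14 a b) / (2 * Real.log b)))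
      atTop (𝓝 1) := by
    have := (hF114 a).mul (hF214 a)
    simpa using this
  refine tendsto_of_tendsto_of_tendsto_of_le_of_le' hLo hUp14 ?_ ?_
  · -- lower bound
    filter_upwards [eventually_ge_atTop (3:ℝ),
      (hphi14 a).eventually (lt_mem_nhds (by norm_num : (0:ℝ) < 1))] with b hb hpos
    have hL := log_ge_one14 hb
    have hb0 : (0:ℝ) < b := by linarith
    have hLpos : (0:ℝ) < Real.log b := by linarith
    have hb1 : b ≠ 1 := by intro h; rw [h] at hb; linarith
    have hCpos : (0:ℝ) < Cf14 a b := by simp only [Cf14]; nlinarith [sq_nonneg a]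
    have h1p : (0:ℝ) < 1 + (Real.log b)⁻¹ := by positivity
    have hDpos : (0:ℝ) < Df14 b := by simp only [Df14]; positivity
    have hDC : (0:ℝ) < Df14 b - Cf14 a b := by
      rw [DC_eq14 a hb0.ne']
      exact mul_pos (by positivity) hpos
    have hkey := key14 (Cf14 a b) (Df14 b) hCpos hDpos (sub_pos.1 hDC).ne'
    have hmono : (∫ x in Ioi (0:ℝ), x / ((1 + x ^ 2) * (Cf14 a b + Df14 b * x ^ 2)))
        ≤ ∫ x in Ioi (0:ℝ), x / ((1 + x ^ 2) * (1 + (a + b * x) ^ 2)) := by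
      apply integral_mono_of_nonneg
      · refine (ae_restrict_iff' measurableSet_Ioi).2 (ae_of_all _ fun x hx => ?_)
        have hx' : (0:ℝ) < x := hx
        positivity
      · exact mid_integrable14 a b ha hb0 hb1
      · refine (ae_restrict_iff' measurableSet_Ioi).2 (ae_of_all _ fun x hx => ?_)
        have hx' : (0:ℝ) < x := hx
        have hinner : 1 + (a + b * x) ^ 2 ≤ Cf14 a b + Df14 b * x ^ 2 := by
          have h1' : 2 * a * b * x - a ^ 2 * Real.log b ≤ b ^ 2 * x ^ 2 / Real.log b := by
            rw [le_div_iff₀ hLpos]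
            nlinarith [sq_nonneg (a * Real.log b - b * x)]
          have h2' : Df14 b * x ^ 2 = b ^ 2 * x ^ 2 + b ^ 2 * x ^ 2 / Real.log b := by
            simp only [Df14]
            field_simp
          simp only [Cf14]
          nlinarith [h1', h2']
        have hdpos : (0:ℝ) < (1 + x ^ 2) * (1 + (a + b * x) ^ 2) := by positivity
        exact div_le_div_of_nonneg_left hx'.le hdpos
          (mul_le_mul_of_nonneg_left hinner (by positivity))
    have hg1 : π ^ 2 * b ^ 2 / Real.log b * g1 a b
        = b ^ 2 * (∫ x in Ioi (0:ℝ), x / ((1 + x ^ 2) * (1 + (a + b * x) ^ 2))) / Real.log b := by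
      rw [g1]
      field_simp [Real.pi_ne_zero]
    have heq : ∀ Lg : ℝ, b ^ 2 / (Df14 b - Cf14 a b) * (Lg / (2 * Real.log b))
        = b ^ 2 * (Lg / (2 * (Df14 b - Cf14 a b))) / Real.log b := by
      intro Lg
      rw [div_mul_div_comm, mul_div_assoc', div_div]
      congr 1
      ring
    rw [heq _, hg1, ← hkey.2]
    exact (div_le_div_iff_of_pos_right hLpos).2 (mul_le_mul_of_nonneg_left hmono (by positivity))
  · -- upper bound
    filter_upwards [eventually_ge_atTop (3:ℝ)] with b hb
    have hL := log_ge_one14 hb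
    have hb0 : (0:ℝ) < b := by linarith
    have hLpos : (0:ℝ) < Real.log b := by linarith
    have hb1 : b ≠ 1 := by intro h; rw [h] at hb; linarith
    have hb21 : b ^ 2 - 1 ≠ 0 := by nlinarith
    have hg1 : π ^ 2 * b ^ 2 / Real.log b * g1 a b
        = b ^ 2 * (∫ x in Ioi (0:ℝ), x / ((1 + x ^ 2) * (1 + (a + b * x) ^ 2))) / Real.log b := by
      rw [g1]
      field_simp [Real.pi_ne_zero]
    rw [hg1]
    calc b ^ 2 * (∫ x in Ioi (0:ℝ), x / ((1 + x ^ 2) * (1 + (a + b * x) ^ 2))) / Real.log b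
        ≤ b ^ 2 * (Real.log b / (b ^ 2 - 1)) / Real.log b :=
          (div_le_div_iff_of_pos_right hLpos).2
            (mul_le_mul_of_nonneg_left (part2core14 a b ha hb0 hb1) (by positivity))
      _ = b ^ 2 / (b ^ 2 - 1) := by field_simp

theorem stmt14 :
    (∀ b : ℝ, 0 < b → b ≠ 1 → g1 0 b = Real.log b / (π ^ 2 * (b ^ 2 - 1))) ∧
    (∀ a b : ℝ, 0 ≤ a → 0 < b → b ≠ 1 →
      g1 a b ≤ Real.log b / (π ^ 2 * (b ^ 2 - 1))) ∧
    (∀ a : ℝ, 0 ≤ a →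
      Tendsto (fun b : ℝ => π ^ 2 * b ^ 2 / Real.log b * g1 a b) atTop (nhds 1)) := by
  refine ⟨fun b hb hb1 => ?_, fun a b ha hb hb1 => ?_, fun a ha => part3of14 a ha⟩
  · rw [g1]
    simp only [zero_add, mul_pow]
    rw [part1of14 b hb hb1]
    have hb21 : b ^ 2 - 1 ≠ 0 := sub_ne_zero.mpr (sq_ne_one14 hb hb1)
    field_simp
  · rw [g1]
    have h := part2core14 a b ha hb hb1
    have hb21 : b ^ 2 - 1 ≠ 0 := sub_ne_zero.mpr (sq_ne_one14 hb hb1)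
    have := mul_le_mul_of_nonneg_left h (by positivity : (0:ℝ) ≤ 1 / π ^ 2)
    calc (1 / π ^ 2) * ∫ x in Ioi (0:ℝ), x / ((1 + x ^ 2) * (1 + (a + b * x) ^ 2))
        ≤ (1 / π ^ 2) * (Real.log b / (b ^ 2 - 1)) := this
      _ = Real.log b / (π ^ 2 * (b ^ 2 - 1)) := by
          field_simp
end
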